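/- Let π, π', α ∈ (0,1), let a, b ≥ 0 with a + b > 0, set π_unif = (π' − α·π')/(π' + α − 2·α·π'), α_unif = (π − π·π_unif)/(π_unif + π − 2·π·π_unif), p_u = π·a + (1−π)·b, and p_t = π'·a + (1−π')·b. Then sign(π'·a/p_t − α) = sign(π·a/p_u − α_unif). -/

import Mathlib

lemma sign_mul_pos_left (k x : ℝ) (hk : 0 < k) :
    Real.sign (k * x) = Real.sign x := by
  rcases lt_trichotomy x 0 with h | h | h
  · rw [Real.sign_of_neg h, Real.sign_of_neg (mul_neg_of_pos_of_neg hk h)]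
  · simp [h]
  · rw [Real.sign_of_pos h, Real.sign_of_pos (mul_pos hk h)]

theorem stmt_3 (π π' α a b πunif αunif pu pt : ℝ)
    (hπ : π ∈ Set.Ioo (0:ℝ) 1) (hπ' : π' ∈ Set.Ioo (0:ℝ) 1) (hα : α ∈ Set.Ioo (0:ℝ) 1)
    (ha : 0 ≤ a) (hb : 0 ≤ b) (hab : 0 < a + b)
    (hunif : πunif = (π' - α * π') / (π' + α - 2 * α * π'))
    (haunif : αunif = (π - π * πunif) / (πunif + π - 2 * π * πunif))
    (hpu : pu = π * a + (1 - π) * b) (hpt : pt = π' * a + (1 - π') * b) :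
    Real.sign (π' * a / pt - α) = Real.sign (π * a / pu - αunif) := by
  obtain ⟨hπ0, hπ1⟩ := hπ
  obtain ⟨hπ'0, hπ'1⟩ := hπ'
  obtain ⟨hα0, hα1⟩ := hα
  have hpt0 : 0 < pt := by
    rcases lt_or_ge 0 a with h | h
    · nlinarith
    · have haz : a = 0 := le_antisymm h ha
      rw [hpt, haz]; nlinarith
  have hpu0 : 0 < pu := by
    rcases lt_or_ge 0 a with h | h
    · nlinarith
    · have haz : a = 0 := le_antisymm h ha
      rw [hpu, haz]; nlinarith
  set D1 : ℝ := π' + α - 2 * α * π' with hD1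
  have hD10 : 0 < D1 := by nlinarith
  have hπu0 : 0 < πunif := by
    rw [hunif]; apply div_pos _ hD10; nlinarith
  have hπu1 : πunif < 1 := by
    rw [hunif, div_lt_one hD10]; nlinarith
  set D2 : ℝ := πunif + π - 2 * π * πunif with hD2
  have hD20 : 0 < D2 := by nlinarith
  set E : ℝ := (1 - α) * π' * a - α * (1 - π') * b with hE
  have h1 : π' * a / pt - α = (1 / pt) * E := by
    field_simp
    rw [hpt, hE]; ring
  have hB : 1 - πunif = (α - α * π') / D1 := by
    rw [hunif]; field_simp; ring
  have h2a : π * a / pu - αunif = (π * (1 - π) / (D2 * pu)) * (πunif * a - (1 - πunif) * b) := by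
    rw [haunif]
    field_simp
    rw [hpu]
    ring
  have h2b : πunif * a - (1 - πunif) * b = (1 / D1) * E := by
    rw [hB, hunif, hE]
    field_simp
  rw [h1, h2a, h2b]
  rw [sign_mul_pos_left _ _ (one_div_pos.mpr hpt0),
    sign_mul_pos_left _ _ (div_pos (mul_pos hπ0 (by linarith)) (mul_pos hD20 hpu0)),
    sign_mul_pos_left _ _ (one_div_pos.mpr hD10)]
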